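/- The cocycle identity holds for the map η : L × X → (Z/3)² defined on generators by η(a, x) = (x(½), −x(½)) and η(b, x) = (1 − x(½), −x(½)): extended by η(1, x) = 0 and η(gh, x) = η(g, h·x) + η(h, x), the map is well-defined on the lamplighter group L, i.e. it respects the defining relations (aⁿb⁻ⁿ)² = 1. -/

import Mathlib

/-!
The lamplighter group acts on lamp configurations `X = (ℤ/2)^(ℤ+½)` (the lamp
at position `i + ½` stored at index `i`); `a` shifts, `b` shifts and flips the
lamp crossing between positions `½` and `-½`.  The cocycle
`η : L × X → (ℤ/3)²` is defined on the generators by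
`η(a,x) = (x(½), -x(½))`, `η(b,x) = (1 - x(½), -x(½))`, extended to words by
`η(1,x) = 0` and the cocycle rule `η(gh,x) = η(g, h·x) + η(h, x)` (with
`η(g⁻¹,x) = -η(g, g⁻¹x)`).  We prove the extension satisfies the cocycle rule
on concatenation of words, and is well defined on the lamplighter group:
it vanishes on the defining relations `(aⁿ b⁻ⁿ)²`, whose action is trivial.
-/

abbrev LampConf : Type := ℤ → ZMod 2

def lampA : Equiv.Perm LampConf :=
  (Equiv.addRight (-1 : ℤ)).arrowCongr (Equiv.refl (ZMod 2))

def lampFlip : LampConf := fun i => if i = -1 then 1 else 0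

def lampB : Equiv.Perm LampConf := lampA.trans (Equiv.addLeft lampFlip)

abbrev C0 := ZMod 3 × ZMod 3

/-- The lamp at position `½` (index `0`), viewed in `ℤ/3`. -/
def lampHalf (x : LampConf) : ZMod 3 := ((x 0).val : ZMod 3)

/-- `η` on the generators: `false ↦ a`, `true ↦ b`. -/
def etaGen : Bool → LampConf → C0
  | false, x => (lampHalf x, -lampHalf x)
  | true, x => (1 - lampHalf x, -lampHalf x)

def stepGen : Bool → Equiv.Perm LampConf
  | false => lampA
  | true => lampB

/-- A letter of a word in the free group on `{a, b}`: a generator together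
with an inversion flag. -/
abbrev Letter := Bool × Bool

def actLetter (l : Letter) : Equiv.Perm LampConf :=
  if l.2 then (stepGen l.1)⁻¹ else stepGen l.1

/-- `η` on letters, with `η(g⁻¹, x) = -η(g, g⁻¹ x)`. -/
def etaLetter (l : Letter) (x : LampConf) : C0 :=
  if l.2 then -(etaGen l.1 ((stepGen l.1)⁻¹ x)) else etaGen l.1 x

/-- The action of a word (product of its letters, leftmost acting last). -/
def actWord : List Letter → LampConf → LampConf
  | [], x => x
  | l :: w, x => actLetter l (actWord w x)

/-- `η` extended to words by `η([],x) = 0` and the cocycle rule. -/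
def etaWord : List Letter → LampConf → C0
  | [], _ => 0
  | l :: w, x => etaLetter l (actWord w x) + etaWord w x

/-- The word `(aⁿ b⁻ⁿ)²`. -/
def relWord (n : ℕ) : List Letter :=
  (List.replicate n (false, false) ++ List.replicate n (true, true)) ++
    (List.replicate n (false, false) ++ List.replicate n (true, true))

/-- The extension of `η` respects the cocycle rule, and vanishes on the
defining relations `(aⁿ b⁻ⁿ)² = 1` of the lamplighter group (whose action on
`X` is trivial); hence `η` is well defined on the lamplighter group. -/

def vv (z : ZMod 2) : ZMod 3 := (z.val : ZMod 3)

lemma vv_add_one (z : ZMod 2) : vv (z + 1) = 1 - vv z := by revert z; decide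

lemma lampHalf_eq (x : LampConf) : lampHalf x = vv (x 0) := rfl

lemma lampA_apply (x : LampConf) (i : ℤ) : lampA x i = x (i + 1) := by
  simp [lampA, Equiv.arrowCongr, sub_neg_eq_add]

lemma lampB_apply (x : LampConf) (i : ℤ) :
    lampB x i = x (i + 1) + (if i = -1 then 1 else 0) := by
  simp [lampB, lampA, lampFlip, Equiv.arrowCongr, sub_neg_eq_add, add_comm]

lemma lampB_inv_apply (x : LampConf) (i : ℤ) :
    (lampB⁻¹ : Equiv.Perm LampConf) x i = x (i - 1) + (if i = 0 then 1 else 0) := by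
  have h : lampB (fun i => x (i - 1) + (if i = 0 then 1 else 0)) = x := by
    funext j
    rw [lampB_apply]
    simp only [add_sub_cancel_right]
    rcases eq_or_ne j (-1) with hj | hj
    · subst hj
      have h11 : (1:ZMod 2) + 1 = 0 := by decide
      norm_num [add_assoc, h11]
      decide
    · simp [hj, show j + 1 ≠ 0 by omega]
  calc (lampB⁻¹ : Equiv.Perm LampConf) x i
      = (lampB⁻¹ : Equiv.Perm LampConf)
          (lampB (fun i => x (i - 1) + (if i = 0 then 1 else 0))) i := by rw [h]
    _ = x (i - 1) + (if i = 0 then 1 else 0) := by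
        rw [show ((lampB⁻¹ : Equiv.Perm LampConf)
          (lampB (fun i => x (i - 1) + (if i = 0 then 1 else 0))))
          = (fun i => x (i - 1) + (if i = 0 then 1 else 0)) from
          Equiv.symm_apply_apply _ _]

lemma actWord_append (u v : List Letter) (x : LampConf) :
    actWord (u ++ v) x = actWord u (actWord v x) := by
  induction u with
  | nil => rfl
  | cons l w ih => simp [actWord, ih]

lemma etaWord_append (u v : List Letter) (x : LampConf) :
    etaWord (u ++ v) x = etaWord u (actWord v x) + etaWord v x := by
  induction u with
  | nil => simp [etaWord]
  | cons l w ih => simp [etaWord, ih, actWord_append, add_assoc]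

lemma actA_pow (n : ℕ) (x : LampConf) (i : ℤ) :
    actWord (List.replicate n (false, false)) x i = x (i + n) := by
  induction n generalizing i with
  | zero => simp [actWord]
  | succ n ih =>
      rw [List.replicate_succ]
      show lampA (actWord (List.replicate n (false, false)) x) i = _
      rw [lampA_apply, ih]
      congr 1
      push_cast
      ring

lemma actB_pow (n : ℕ) (x : LampConf) (i : ℤ) :
    actWord (List.replicate n (true, true)) x i
      = x (i - n) + (if 0 ≤ i ∧ i < n then 1 else 0) := by
  induction n generalizing i with
  | zero =>
      simp only [List.replicate, actWord, Nat.cast_zero, sub_zero]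
      have : ¬ (0 ≤ i ∧ i < (0:ℤ)) := by omega
      simp [this]
  | succ n ih =>
      rw [List.replicate_succ]
      show (lampB⁻¹ : Equiv.Perm LampConf)
        (actWord (List.replicate n (true, true)) x) i = _
      rw [lampB_inv_apply, ih]
      have harg : i - 1 - (n:ℤ) = i - ((n:ℕ)+1 : ℕ) := by push_cast; ring
      rw [harg]
      rcases eq_or_ne i 0 with hi | hi
      · subst hi
        have h1 : ¬ ((0:ℤ) ≤ 0 - 1 ∧ (0:ℤ) - 1 < n) := by omega
        have h2 : (0:ℤ) ≤ 0 ∧ (0:ℤ) < ((n:ℕ)+1 : ℕ) := by constructor <;> omega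
        simp [h1, h2]
      · have h3 : ((0:ℤ) ≤ i - 1 ∧ i - 1 < n) ↔ (0 ≤ i ∧ i < ((n:ℕ)+1 : ℕ)) := by
          push_cast; omega
        rw [if_neg hi, add_zero, if_congr h3 rfl rfl]

def Sa (n : ℕ) (x : LampConf) : ZMod 3 := ∑ k ∈ Finset.range n, vv (x k)
def Sb (n : ℕ) (x : LampConf) : ZMod 3 := ∑ k ∈ Finset.range n, vv (x (-1 - k))

lemma etaA_pow (n : ℕ) (x : LampConf) :
    etaWord (List.replicate n (false, false)) x = (Sa n x, -Sa n x) := by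
  induction n with
  | zero => simp [etaWord, Sa]; rfl
  | succ n ih =>
      rw [List.replicate_succ]
      show etaLetter (false, false) (actWord (List.replicate n (false, false)) x)
          + etaWord (List.replicate n (false, false)) x = _
      rw [ih]
      have hh : lampHalf (actWord (List.replicate n (false, false)) x) = vv (x n) := by
        rw [lampHalf_eq, actA_pow]; norm_num
      have hsa : Sa (n+1) x = Sa n x + vv (x n) := by
        simp [Sa, Finset.sum_range_succ]
      simp only [etaLetter, etaGen, if_neg (by simp : ¬((false,false).2 = true)), hh, hsa]
      ext <;> (try simp) <;> (try push_cast) <;> ring_nf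

lemma etaB_pow (n : ℕ) (x : LampConf) :
    etaWord (List.replicate n (true, true)) x = (-Sb n x, (n : ZMod 3) - Sb n x) := by
  induction n with
  | zero => simp [etaWord, Sb]; rfl
  | succ n ih =>
      rw [List.replicate_succ]
      show etaLetter (true, true) (actWord (List.replicate n (true, true)) x)
          + etaWord (List.replicate n (true, true)) x = _
      rw [ih]
      have hy : (lampB⁻¹ : Equiv.Perm LampConf)
          (actWord (List.replicate n (true, true)) x) 0 = x (-1 - n) + 1 := by
        rw [lampB_inv_apply, actB_pow]
        have hc : ¬ ((0:ℤ) ≤ 0 - 1 ∧ (0:ℤ) - 1 < n) := by omega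
        have harg : (0:ℤ) - 1 - n = -1 - n := by ring
        rw [if_neg hc, add_zero, harg, if_pos rfl]
      have hh : lampHalf ((lampB⁻¹ : Equiv.Perm LampConf)
          (actWord (List.replicate n (true, true)) x)) = 1 - vv (x (-1 - n)) := by
        rw [lampHalf_eq, hy, vv_add_one]
      have hsb : Sb (n+1) x = Sb n x + vv (x (-1 - n)) := by
        simp [Sb, Finset.sum_range_succ]
      simp only [etaLetter, etaGen, if_pos rfl, stepGen, hh, hsb]
      ext <;> (try simp) <;> (try push_cast) <;> ring_nf

def Wrd (n : ℕ) : List Letter :=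
  List.replicate n (false, false) ++ List.replicate n (true, true)

lemma sum_rev (n : ℕ) (x : LampConf) :
    ∑ k ∈ Finset.range n, vv (x ((k:ℤ) - n)) = Sb n x := by
  rw [Sb, ← Finset.sum_range_reflect (fun k => vv (x (-1 - (k:ℤ)))) n]
  apply Finset.sum_congr rfl
  intro i hi
  rw [Finset.mem_range] at hi
  congr 2
  have : ((n - 1 - i : ℕ) : ℤ) = n - 1 - i := by omega
  omega

lemma actW_apply (n : ℕ) (x : LampConf) (i : ℤ) :
    actWord (Wrd n) x i = x i + (if -(n:ℤ) ≤ i ∧ i < 0 then 1 else 0) := by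
  rw [Wrd, actWord_append, actA_pow, actB_pow]
  have h1 : i + (n:ℤ) - n = i := by ring
  rw [h1]
  have h2 : ((0:ℤ) ≤ i + n ∧ i + (n:ℤ) < n) ↔ (-(n:ℤ) ≤ i ∧ i < 0) := by omega
  rw [if_congr h2 rfl rfl]

lemma etaW (n : ℕ) (x : LampConf) :
    etaWord (Wrd n) x = ((n : ZMod 3) - 2 * Sb n x, 0) := by
  rw [Wrd, etaWord_append, etaA_pow, etaB_pow]
  have hSa : Sa n (actWord (List.replicate n (true, true)) x) = (n : ZMod 3) - Sb n x := by
    rw [Sa, ← sum_rev n x]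
    have : ∀ k ∈ Finset.range n,
        vv (actWord (List.replicate n (true, true)) x k) = 1 - vv (x ((k:ℤ) - n)) := by
      intro k hk
      rw [Finset.mem_range] at hk
      rw [actB_pow]
      have : (0:ℤ) ≤ k ∧ (k:ℤ) < n := by constructor <;> omega
      rw [if_pos this, vv_add_one]
    rw [Finset.sum_congr rfl this, Finset.sum_sub_distrib]
    simp
  rw [hSa]
  ext <;> (try simp) <;> (try push_cast) <;> ring_nf

lemma Sb_W (n : ℕ) (x : LampConf) :
    Sb n (actWord (Wrd n) x) = (n : ZMod 3) - Sb n x := by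
  rw [Sb, Sb]
  have : ∀ k ∈ Finset.range n,
      vv (actWord (Wrd n) x (-1 - k)) = 1 - vv (x (-1 - (k:ℤ))) := by
    intro k hk
    rw [Finset.mem_range] at hk
    rw [actW_apply]
    have : -(n:ℤ) ≤ -1 - k ∧ (-1 - (k:ℤ)) < 0 := by constructor <;> omega
    rw [if_pos this, vv_add_one]
  rw [Finset.sum_congr rfl this, Finset.sum_sub_distrib]
  simp

lemma actW_invol (n : ℕ) (x : LampConf) :
    actWord (Wrd n) (actWord (Wrd n) x) = x := by
  funext i
  rw [actW_apply, actW_apply]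
  have h2 : ∀ c : ZMod 2, c + c = 0 := by decide
  rw [add_assoc, h2, add_zero]

theorem eta_cocycle_well_defined :
    (∀ (u v : List Letter) (x : LampConf),
        etaWord (u ++ v) x = etaWord u (actWord v x) + etaWord v x) ∧
    (∀ n : ℕ, 1 ≤ n → ∀ x : LampConf,
        actWord (relWord n) x = x ∧ etaWord (relWord n) x = 0) := by
  refine ⟨etaWord_append, fun n _ x => ?_⟩
  have hrel : relWord n = Wrd n ++ Wrd n := rfl
  constructor
  · rw [hrel, actWord_append, actW_invol]
  · rw [hrel, etaWord_append, etaW, etaW, Sb_W]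
    ext <;> (try simp) <;> (try push_cast) <;> ring_nf
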